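/- For every w ∈ (0,1), ∫_{−2}^{2} (1/(2π)) √(4−x²) / ( x − (w + 1/w) ) dx = −w. (Since the R-transform of a probability measure μ is characterized by G_μ(R_μ(w) + 1/w) = −w, where G_μ is the Stieltjes transform of μ, this identity states that the R-transform of the semicircle law is R(w) = w; note w + 1/w > 2 lies outside the support [−2,2].) -/

import Mathlib

open Real intervalIntegral in
/-- Stieltjes transform of the (unnormalized) semicircle density at a point `s > 2`,
with `q = √(s²-4)` given explicitly. -/
lemma semicircle_stieltjes_aux (s q : ℝ) (hs : 2 < s) (hq0 : 0 < q)
    (hq2 : q ^ 2 = s ^ 2 - 4) :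
    (∫ x in (-2 : ℝ)..2, Real.sqrt (4 - x ^ 2) / (x - s)) = Real.pi * (q - s) := by
  set F : ℝ → ℝ := fun x =>
    Real.sqrt (4 - x ^ 2) - s * Real.arcsin (x / 2)
      - q * Real.arcsin ((4 - s * x) / (2 * (s - x))) with hF
  have hsub : ∀ x : ℝ, x ∈ Set.uIcc (-2 : ℝ) 2 → 0 < s - x := by
    intro x hx
    rw [Set.uIcc_of_le (by norm_num)] at hx
    have := hx.2
    linarith
  -- continuity of F on [-2,2]
  have hcont : ContinuousOn F (Set.Icc (-2 : ℝ) 2) := by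
    apply ContinuousOn.sub
    apply ContinuousOn.sub
    · exact ((continuous_const.sub (continuous_pow 2)).sqrt).continuousOn
    · exact (continuous_const.mul (Real.continuous_arcsin.comp
        (continuous_id.div_const 2))).continuousOn
    · apply ContinuousOn.mul continuousOn_const
      apply Real.continuous_arcsin.comp_continuousOn
      apply ContinuousOn.div
      · exact (continuous_const.sub (continuous_const.mul continuous_id)).continuousOn
      · exact (continuous_const.mul (continuous_const.sub continuous_id)).continuousOn
      · intro x hx
        have : 0 < s - x := by have := hx.2; linarith
        positivity
  -- derivative of F on (-2,2)
  have hderiv : ∀ x ∈ Set.Ioo (-2 : ℝ) 2,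
      HasDerivAt F (Real.sqrt (4 - x ^ 2) / (x - s)) x := by
    intro x hx
    obtain ⟨hxl, hxr⟩ := hx
    have hx2 : x ^ 2 < 4 := by nlinarith
    have h4pos : (0 : ℝ) < 4 - x ^ 2 := by linarith
    set R := Real.sqrt (4 - x ^ 2) with hRdef
    have hR0 : 0 < R := Real.sqrt_pos.mpr h4pos
    have hR2 : R ^ 2 = 4 - x ^ 2 := Real.sq_sqrt h4pos.le
    have hsx : 0 < s - x := by linarith
    -- piece 1 : sqrt
    have h1 : HasDerivAt (fun y : ℝ => Real.sqrt (4 - y ^ 2)) (-x / R) x := by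
      have hin : HasDerivAt (fun y : ℝ => 4 - y ^ 2) (-(2 * x)) x := by
        simpa using (hasDerivAt_pow 2 x).const_sub 4
      have := hin.sqrt (by positivity)
      convert this using 1
      rw [← hRdef]
      field_simp
    -- piece 2 : s * arcsin (x/2)
    have h2 : HasDerivAt (fun y : ℝ => s * Real.arcsin (y / 2)) (s / R) x := by
      have hu : HasDerivAt (fun y : ℝ => y / 2) (1 / 2) x := by
        simpa using (hasDerivAt_id x).div_const 2
      have harc := (Real.hasDerivAt_arcsin
        (show x / 2 ≠ -1 by intro h; nlinarith [h]) 
        (show x / 2 ≠ 1 by intro h; nlinarith [h])).comp x hu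
      have hsq : Real.sqrt (1 - (x / 2) ^ 2) = R / 2 := by
        rw [show 1 - (x / 2) ^ 2 = (R / 2) ^ 2 by rw [div_pow, div_pow, hR2]; ring,
          Real.sqrt_sq (by positivity)]
      have := harc.const_mul s
      refine this.congr_deriv (Eq.symm ?_)
      rw [hsq]
      field_simp
    -- piece 3 : q * arcsin u
    have h3 : HasDerivAt (fun y : ℝ => q * Real.arcsin ((4 - s * y) / (2 * (s - y))))
        (-q ^ 2 / ((s - x) * R)) x := by
      set u : ℝ := (4 - s * x) / (2 * (s - x)) with hu
      have hnum : HasDerivAt (fun y : ℝ => 4 - s * y) (-s) x := by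
        simpa using ((hasDerivAt_id x).const_mul s).const_sub 4
      have hden : HasDerivAt (fun y : ℝ => 2 * (s - y)) (-2) x := by
        simpa using ((hasDerivAt_id x).const_sub s).const_mul 2
      have hdu : HasDerivAt (fun y : ℝ => (4 - s * y) / (2 * (s - y)))
          (-q ^ 2 / (2 * (s - x) ^ 2)) x := by
        have := hnum.div hden (by positivity)
        refine this.congr_deriv (Eq.symm ?_)
        field_simp
        nlinarith [hq2]
      have hu1 : u < 1 := by
        rw [hu, div_lt_one (by positivity)]
        nlinarith
      have hu1' : -1 < u := by
        rw [hu, lt_div_iff₀ (by positivity)]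
        nlinarith
      have hsq : Real.sqrt (1 - u ^ 2) = q * R / (2 * (s - x)) := by
        rw [show 1 - u ^ 2 = (q * R / (2 * (s - x))) ^ 2 by
          have h5 : (q * R / (2 * (s - x))) ^ 2 = (s ^ 2 - 4) * (4 - x ^ 2) / (4 * (s - x) ^ 2) := by
            rw [div_pow, mul_pow, hR2, hq2]; ring
          rw [h5, hu]
          field_simp
          ring, Real.sqrt_sq (by positivity)]
      have harc := (Real.hasDerivAt_arcsin (ne_of_gt hu1') (ne_of_lt hu1)).comp x hdu
      have := harc.const_mul q
      refine this.congr_deriv (Eq.symm ?_)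
      rw [hsq]
      field_simp
    have := (h1.sub h2).sub h3
    refine this.congr_deriv (Eq.symm ?_)
    have hxs : x - s ≠ 0 := by intro h; linarith
    field_simp
    linear_combination (s - x) * hR2 + (s - x) * hq2
  -- integrability
  have hint : IntervalIntegrable (fun x => Real.sqrt (4 - x ^ 2) / (x - s))
      MeasureTheory.volume (-2 : ℝ) 2 := by
    apply ContinuousOn.intervalIntegrable
    apply ContinuousOn.div
    · exact ((continuous_const.sub (continuous_pow 2)).sqrt).continuousOn
    · exact (continuous_id.sub continuous_const).continuousOn
    · intro x hx
      have := hsub x hx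
      intro h; rw [sub_eq_zero] at h; rw [h] at this; linarith
  rw [intervalIntegral.integral_eq_sub_of_hasDerivAt_of_le (by norm_num) hcont hderiv hint]
  -- evaluate endpoints
  have hs2 : (0:ℝ) < s - 2 := by linarith
  have e1 : (4 - s * 2) / (2 * (s - 2)) = -1 := by
    field_simp
    ring
  have e2 : (4 - s * (-2)) / (2 * (s - (-2))) = 1 := by
    rw [div_eq_one_iff_eq (ne_of_gt (by linarith : (0:ℝ) < 2 * (s - (-2))))]
    ring
  have h4 : Real.sqrt (4 - (2:ℝ) ^ 2) = 0 := by norm_num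
  have h4' : Real.sqrt (4 - (-2:ℝ) ^ 2) = 0 := by norm_num
  rw [hF]
  simp only [e1, e2, h4, h4', Real.arcsin_one, Real.arcsin_neg_one,
    show (2:ℝ)/2 = 1 by norm_num, show (-2:ℝ)/2 = -1 by norm_num]
  ring

/-- **R-transform of the semicircle law is `R(w) = w`.** For every `w ∈ (0,1)`,
`∫_{−2}^{2} (1/(2π)) √(4−x²) / (x − (w + 1/w)) dx = −w`; i.e. the Stieltjes transform of the
semicircle law satisfies `G(R(w) + 1/w) = −w` with `R(w) = w`. -/
theorem semicircle_R_transform (w : ℝ) (hw0 : 0 < w) (hw1 : w < 1) :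
    (∫ x in (-2 : ℝ)..2,
        (1 / (2 * Real.pi)) * Real.sqrt (4 - x ^ 2) / (x - (w + 1 / w))) = -w := by
  have hs : 2 < w + 1 / w := by
    have h1 : (0:ℝ) < (1 - w) ^ 2 / w := div_pos (by nlinarith) hw0
    have e : w + 1 / w - 2 = (1 - w) ^ 2 / w := by field_simp; ring
    linarith
  have hq0 : 0 < 1 / w - w := by
    have h1 : (0:ℝ) < (1 - w) * (1 + w) / w := div_pos (by nlinarith) hw0
    have e : 1 / w - w = (1 - w) * (1 + w) / w := by field_simp; ring
    linarith
  have hq2 : (1 / w - w) ^ 2 = (w + 1 / w) ^ 2 - 4 := by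
    field_simp
    ring
  have key := semicircle_stieltjes_aux (w + 1 / w) (1 / w - w) hs hq0 hq2
  simp only [mul_div_assoc]
  rw [intervalIntegral.integral_const_mul, key]
  have hπ : Real.pi ≠ 0 := Real.pi_ne_zero
  field_simp
  ring
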